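/- Let D be the double arrow space, i.e. (Set.Icc (0:ℝ) 1) × Bool with the lexicographic order (false < true) and its order topology. For every countable family F of continuous functions D → ℝ there exists x with 0 < x < 1 such that f(x, false) = f(x, true) for every f ∈ F. In particular, no countable family of continuous real-valued functions separates the points of D. -/

import Mathlib

/-- The double arrow space: `[0,1] × Bool` with the lexicographic order topology. -/
abbrev DoubleArrow : Type := Lex (Set.Icc (0:ℝ) 1 × Bool)

noncomputable instance : TopologicalSpace DoubleArrow := Preorder.topology DoubleArrow

instance : OrderTopology DoubleArrow := ⟨rfl⟩

/-- A set of reals all of whose points are isolated on the right is countable. -/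
lemma countable_right_isolated {A : Set ℝ}
    (h : ∀ x ∈ A, ∃ y, x < y ∧ ∀ z ∈ A, x < z → y ≤ z) : A.Countable := by
  choose! y h1 h2 using h
  refine Set.PairwiseDisjoint.countable_of_Ioo (y := y) ?_ h1
  intro u hu v hv huv
  rcases huv.lt_or_gt with hlt | hlt
  · exact Set.disjoint_left.2 fun t ht ht' =>
      absurd (ht.2.trans_le (h2 u hu v hv hlt)) (not_lt.2 ht'.1.le)
  · exact Set.disjoint_left.2 fun t ht ht' =>
      absurd (ht'.2.trans_le (h2 v hv u hu hlt)) (not_lt.2 ht.1.le)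

/-- For a fixed continuous `f` and fixed jump size `1/(n+1)`, the set of jump points
is countable. -/
lemma jumpSet_countable (f : DoubleArrow → ℝ) (hf : Continuous f) (n : ℕ) :
    {x : ℝ | ∃ hx : x ∈ Set.Icc (0:ℝ) 1, x < 1 ∧
      (1:ℝ)/(n+1) ≤ |f (toLex (⟨x, hx⟩, true)) - f (toLex (⟨x, hx⟩, false))|}.Countable := by
  apply countable_right_isolated
  rintro x ⟨hx, hx1, hjump⟩
  set a : DoubleArrow := toLex ((⟨x, hx⟩ : Set.Icc (0:ℝ) 1), true) with ha
  have hε : (0:ℝ) < 1/(2*(n+1)) := by positivity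
  have hnb : f ⁻¹' Metric.ball (f a) (1/(2*(n+1))) ∈ nhds a :=
    hf.continuousAt.preimage_mem_nhds (Metric.ball_mem_nhds _ hε)
  have hu : a < toLex ((⟨1, by norm_num⟩ : Set.Icc (0:ℝ) 1), true) := by
    rw [Prod.Lex.lt_iff]
    exact Or.inl (by exact_mod_cast hx1)
  obtain ⟨u', hu', hsub⟩ := exists_Ico_subset_of_mem_nhds' hnb hu
  have hxu : x < ((ofLex u').1 : ℝ) := by
    have := hu'.1
    rw [show u' = toLex (ofLex u') from rfl, Prod.Lex.lt_iff] at this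
    rcases this with h | ⟨h, h'⟩
    · exact_mod_cast h
    · exact absurd h' (by simp [ha])
  refine ⟨((ofLex u').1 : ℝ), hxu, ?_⟩
  rintro z ⟨hz, hz1, hjz⟩ hxz
  by_contra hzy
  push_neg at hzy
  have hmem : ∀ b : Bool, toLex ((⟨z, hz⟩ : Set.Icc (0:ℝ) 1), b) ∈ Set.Ico a u' := by
    intro b
    constructor
    · refine le_of_lt ?_
      rw [ha, Prod.Lex.lt_iff]
      exact Or.inl (by exact_mod_cast hxz)
    · rw [show u' = toLex (ofLex u') from rfl, Prod.Lex.lt_iff]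
      exact Or.inl (by exact_mod_cast hzy)
  have h1 := hsub (hmem true)
  have h2 := hsub (hmem false)
  simp only [Set.mem_preimage, Metric.mem_ball, Real.dist_eq] at h1 h2
  have htri := abs_sub_le (f (toLex ((⟨z, hz⟩ : Set.Icc (0:ℝ) 1), true))) (f a)
    (f (toLex ((⟨z, hz⟩ : Set.Icc (0:ℝ) 1), false)))
  rw [abs_sub_comm (f a)] at htri
  have hhalf : 1/(2*((n:ℝ)+1)) + 1/(2*((n:ℝ)+1)) = 1/((n:ℝ)+1) := by
    have h0 : ((n:ℝ)+1) ≠ 0 := by positivity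
    field_simp
    norm_num
  linarith

/-- For every countable family `F` of continuous real-valued functions on the double arrow
space there is `x` with `0 < x < 1` such that every `f ∈ F` takes the same value at
`(x, false)` and `(x, true)`. -/
theorem stmt_16 (F : Set (DoubleArrow → ℝ)) (hF : F.Countable)
    (hcont : ∀ f ∈ F, Continuous f) :
    ∃ x : Set.Icc (0:ℝ) 1, (0:ℝ) < (x : ℝ) ∧ (x : ℝ) < 1 ∧
      ∀ f ∈ F, f (toLex (x, false)) = f (toLex (x, true)) := by
  classical
  set T : Set ℝ := ⋃ f ∈ F, ⋃ n : ℕ, {x : ℝ | ∃ hx : x ∈ Set.Icc (0:ℝ) 1, x < 1 ∧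
      (1:ℝ)/(n+1) ≤ |f (toLex (⟨x, hx⟩, true)) - f (toLex (⟨x, hx⟩, false))|} with hT
  have hTc : T.Countable :=
    hF.biUnion fun f hf => Set.countable_iUnion fun n => jumpSet_countable f (hcont f hf) n
  have : ¬ (Set.Ioo (0:ℝ) 1 ⊆ T) := by
    intro hsub
    have : (Set.Ioo (0:ℝ) 1).Countable := hTc.mono hsub
    rw [← Cardinal.le_aleph0_iff_set_countable, Cardinal.mk_Ioo_real (by norm_num : (0:ℝ) < 1)]
      at this
    exact absurd this (by simp [Cardinal.aleph0_lt_continuum.not_ge])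
  obtain ⟨x, hxI, hxT⟩ := Set.not_subset.1 this
  have hx : x ∈ Set.Icc (0:ℝ) 1 := ⟨hxI.1.le, hxI.2.le⟩
  refine ⟨⟨x, hx⟩, hxI.1, hxI.2, ?_⟩
  intro f hf
  by_contra hne
  have hd : 0 < |f (toLex ((⟨x, hx⟩ : Set.Icc (0:ℝ) 1), true))
      - f (toLex ((⟨x, hx⟩ : Set.Icc (0:ℝ) 1), false))| := by
    rw [abs_pos, sub_ne_zero]
    exact fun h => hne h.symm
  obtain ⟨n, hn⟩ := exists_nat_one_div_lt hd
  apply hxT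
  refine Set.mem_biUnion hf (Set.mem_iUnion.2 ⟨n, ?_⟩)
  exact ⟨hx, hxI.2, hn.le⟩
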